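/- There exists a constant C > 0 such that for every natural number p ≥ 2, | (1/p!) · ∫_{0}^{∞} e^{-t} · t^{p+1}/(1+t) dt − 1 + 1/p | ≤ C / p². Equivalently, λ^p_max = 1 − 1/p + O(p^{-2}) as p → ∞. -/

import Mathlib

open MeasureTheory Set

lemma int_pow (n : ℕ) : IntegrableOn (fun t : ℝ => Real.exp (-t) * t ^ n) (Ioi 0) := by
  have h := Real.GammaIntegral_convergent (s := (n + 1 : ℝ)) (by positivity)
  refine h.congr_fun (fun x hx => ?_) measurableSet_Ioi
  rw [add_sub_cancel_right]; simp only [Real.rpow_natCast]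

lemma eval_pow (n : ℕ) : ∫ t in Ioi (0:ℝ), Real.exp (-t) * t ^ n = n.factorial := by
  have h := Real.Gamma_eq_integral (s := (n + 1 : ℝ)) (by positivity)
  rw [Real.Gamma_nat_eq_factorial] at h
  rw [h]
  refine setIntegral_congr_fun measurableSet_Ioi (fun x hx => ?_)
  rw [add_sub_cancel_right, Real.rpow_natCast]

lemma int_quot (n : ℕ) :
    IntegrableOn (fun t : ℝ => Real.exp (-t) * t ^ n / (1 + t)) (Ioi 0) := by
  refine Integrable.mono (int_pow n) ?_ ?_
  · apply Measurable.aestronglyMeasurable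
    exact ((Real.measurable_exp.comp measurable_neg).mul (measurable_id.pow_const n)).div
      (measurable_const.add measurable_id)
  · filter_upwards [self_mem_ae_restrict (measurableSet_Ioi : MeasurableSet (Ioi (0:ℝ)))]
      with x hx
    have hx0 : (0:ℝ) < x := hx
    rw [Real.norm_eq_abs, Real.norm_eq_abs, abs_of_nonneg (by positivity),
      abs_of_nonneg (by positivity)]
    rw [div_le_iff₀ (by linarith)]
    nlinarith [Real.exp_pos (-x), pow_pos hx0 n, mul_pos (Real.exp_pos (-x)) (pow_pos hx0 n)]

theorem toeplitz_expSymbol_max_eigenvalue_asymptotics :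
    ∃ C > 0, ∀ p : ℕ, 2 ≤ p →
      |(1 / (p.factorial : ℝ)) *
          (∫ t in Set.Ioi (0 : ℝ), Real.exp (-t) * t ^ (p + 1) / (1 + t)) - 1 + 1 / (p : ℝ)| ≤
        C / (p : ℝ) ^ 2 := by
  refine ⟨2, two_pos, fun p hp => ?_⟩
  obtain ⟨k, rfl⟩ : ∃ k, p = k + 2 := ⟨p - 2, by omega⟩
  set I := ∫ t in Ioi (0:ℝ), Real.exp (-t) * t ^ (k + 2 + 1) / (1 + t) with hI
  set x : ℝ := (k : ℝ) with hx
  have hx0 : 0 ≤ x := Nat.cast_nonneg k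
  set a : ℝ := ((k+2).factorial : ℝ) with ha'
  set b : ℝ := ((k+1).factorial : ℝ) with hb'
  set c : ℝ := (k.factorial : ℝ) with hc'
  have hb : 0 < b := by positivity
  have hc : 0 < c := by positivity
  have hab : a = (x + 2) * b := by
    rw [ha', hb', hx]; rw [show k + 2 = (k+1) + 1 from rfl, Nat.factorial_succ]; push_cast; ring
  have hbc : b = (x + 1) * c := by
    rw [hb', hc', hx, Nat.factorial_succ]; push_cast; ring
  have ha : 0 < a := by positivity
  -- lower bound on I
  have hl : a - b ≤ I := by
    have h1 : ∫ t in Ioi (0:ℝ),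
        (Real.exp (-t) * t ^ (k+2) - Real.exp (-t) * t ^ (k+1)) = a - b := by
      rw [integral_sub (int_pow (k+2)) (int_pow (k+1)), eval_pow, eval_pow]
    rw [← h1]
    refine setIntegral_mono_on ((int_pow (k+2)).sub (int_pow (k+1))) (int_quot (k+2+1))
      measurableSet_Ioi (fun t ht => ?_)
    have ht0 : (0:ℝ) < t := ht
    rw [le_div_iff₀ (by linarith)]
    have e2 : t ^ (k+2) = t ^ (k+1) * t := by ring
    have e3 : t ^ (k+2+1) = t ^ (k+1) * t * t := by ring
    rw [e2, e3]
    nlinarith [mul_pos (Real.exp_pos (-t)) (pow_pos ht0 (k+1))]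
  -- upper bound on I
  have hu : I ≤ a - b + c := by
    have h2 := integral_add (μ := volume.restrict (Ioi (0:ℝ)))
      ((int_pow (k+2)).sub (int_pow (k+1))) (int_pow k)
    simp only [Pi.add_apply, Pi.sub_apply] at h2
    have h3 : ∫ t in Ioi (0:ℝ),
        (Real.exp (-t) * t ^ (k+2) - Real.exp (-t) * t ^ (k+1) + Real.exp (-t) * t ^ k)
        = a - b + c := by
      rw [h2, integral_sub (int_pow (k+2)) (int_pow (k+1)), eval_pow, eval_pow, eval_pow]
    rw [← h3]
    refine setIntegral_mono_on (int_quot (k+2+1))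
      (((int_pow (k+2)).sub (int_pow (k+1))).add (int_pow k)) measurableSet_Ioi (fun t ht => ?_)
    have ht0 : (0:ℝ) < t := ht
    rw [div_le_iff₀ (by linarith)]
    have e1 : t ^ (k+1) = t ^ k * t := by ring
    have e2 : t ^ (k+2) = t ^ k * t * t := by ring
    have e3 : t ^ (k+2+1) = t ^ k * t * t * t := by ring
    rw [e1, e2, e3]
    nlinarith [mul_pos (Real.exp_pos (-t)) (pow_pos ht0 k)]
  -- final arithmetic
  have hcast : ((k + 2 : ℕ) : ℝ) = x + 2 := by push_cast; ring
  rw [hcast]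
  have hx2 : (0:ℝ) < x + 2 := by linarith
  have hx1 : (0:ℝ) < x + 1 := by linarith
  set E : ℝ := 1 / a * I - 1 + 1 / (x + 2) with hE
  have hkey : E = (I - (a - b)) / ((x + 2) * b) := by
    rw [hE, hab]; field_simp; ring
  have h0 : 0 ≤ E := by
    rw [hkey]
    exact div_nonneg (by linarith) (by positivity)
  have hEu : E ≤ 1 / ((x + 2) * (x + 1)) := by
    rw [hkey, div_le_div_iff₀ (by positivity) (by positivity)]
    have hq : 0 ≤ (c - (I - (a - b))) * ((x+2)*(x+1)) :=
      mul_nonneg (by linarith) (mul_pos hx2 hx1).le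
    have hb2 : (x+2)*b = (x+2)*((x+1)*c) := by rw [hbc]
    nlinarith [hq, hb2]
  rw [abs_of_nonneg h0]
  calc E ≤ 1 / ((x + 2) * (x + 1)) := hEu
    _ ≤ 2 / (x + 2) ^ 2 := by
      rw [div_le_div_iff₀ (by positivity) (by positivity)]
      nlinarith
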